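/- Let f : ℝ → ℝ be bounded, continuous on ℝ \ {0}, with finite one-sided limits f(0⁺) and f(0⁻). Let D : ℝ → ℝ be continuous, compactly supported, with ∫ D = 1. Define F_σ := f ∗ D_σ where D_σ(x) = σ⁻¹ D(σ⁻¹ x). Then for every continuous compactly supported ψ : ℝ → ℝ, lim_{σ → 0⁺} ∫ F_σ(x)·ψ(x) dx = ∫ f(x)·ψ(x) dx. -/

import Mathlib

open MeasureTheory Filter
open scoped Convolution

theorem stmt7 (f : ℝ → ℝ) (C : ℝ) (hfb : ∀ x, |f x| ≤ C)
    (hfc : ContinuousOn f {(0:ℝ)}ᶜ)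
    (hfp : ∃ a, Tendsto f (nhdsWithin 0 (Set.Ioi 0)) (nhds a))
    (hfm : ∃ b, Tendsto f (nhdsWithin 0 (Set.Iio 0)) (nhds b))
    (D : ℝ → ℝ) (hD : Continuous D) (hDc : HasCompactSupport D)
    (hDi : ∫ x, D x = 1)
    (ψ : ℝ → ℝ) (hψ : Continuous ψ) (hψc : HasCompactSupport ψ) :
    Tendsto
      (fun σ : ℝ => ∫ x, (∫ y, f y * ((1 / σ) * D ((x - y) / σ))) * ψ x)
      (nhdsWithin 0 (Set.Ioi 0)) (nhds (∫ x, f x * ψ x)) := by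
  have hC0 : 0 ≤ C := le_trans (abs_nonneg _) (hfb 0)
  -- f is a.e. strongly measurable
  have hfmeas : AEStronglyMeasurable f (volume : Measure ℝ) := by
    have h := hfc.aestronglyMeasurable (μ := volume) (measurableSet_singleton (0:ℝ)).compl
    have e : (volume : Measure ℝ).restrict {(0:ℝ)}ᶜ = volume :=
      Measure.restrict_eq_self_of_ae_mem (compl_mem_ae_iff.2 (by simp))
    rwa [e] at h
  -- f is locally integrable
  have hfloc : LocallyIntegrable f (volume : Measure ℝ) := by
    rw [locallyIntegrable_iff]
    intro k hk
    exact Measure.integrableOn_of_bounded hk.measure_lt_top.ne hfmeas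
      (Filter.Eventually.of_forall fun x => by
        simpa [Real.norm_eq_abs] using hfb x)
  have hψint : Integrable ψ (volume : Measure ℝ) := hψ.integrable_of_hasCompactSupport hψc
  have hDint : Integrable D (volume : Measure ℝ) := hD.integrable_of_hasCompactSupport hDc
  set Iψ : ℝ := ∫ x, |ψ x| with hIψ
  -- the function g
  set g : ℝ → ℝ := fun s => ∫ x, f x * ψ (x + s) with hgdef
  -- continuity of g via convolution
  set u : ℝ → ℝ := fun y => ψ (-y) with hudef
  have hu_cont : Continuous u := hψ.comp continuous_neg
  have hu_supp : HasCompactSupport u := hψc.comp_homeomorph (Homeomorph.neg ℝ)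
  have hconv : Continuous (f ⋆[ContinuousLinearMap.mul ℝ ℝ] u) :=
    hu_supp.continuous_convolution_right _ hfloc hu_cont
  have hg_conv : ∀ s : ℝ, g s = (f ⋆[ContinuousLinearMap.mul ℝ ℝ] u) (-s) := by
    intro s
    simp only [hgdef, convolution, ContinuousLinearMap.mul_apply', hudef]
    congr 1
    ext x
    congr 2
    ring
  have hg_cont : Continuous g := by
    have : g = (f ⋆[ContinuousLinearMap.mul ℝ ℝ] u) ∘ (fun s : ℝ => -s) := funext hg_conv
    rw [this]
    exact hconv.comp continuous_neg
  -- bound on g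
  have hg_bound : ∀ s : ℝ, |g s| ≤ C * Iψ := by
    intro s
    have h1 : |g s| ≤ ∫ x, |f x| * |ψ (x + s)| := by
      simpa [Real.norm_eq_abs, abs_mul] using
        norm_integral_le_integral_norm (μ := volume) (fun x => f x * ψ (x + s))
    have h2 : (∫ x, |f x| * |ψ (x + s)|) ≤ ∫ x, C * |ψ (x + s)| := by
      apply integral_mono_of_nonneg
      · exact Filter.Eventually.of_forall fun x => mul_nonneg (abs_nonneg _) (abs_nonneg _)
      · exact ((hψint.comp_add_right s).abs).const_mul C
      · exact Filter.Eventually.of_forall fun x =>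
          mul_le_mul_of_nonneg_right (hfb x) (abs_nonneg _)
    have h3 : (∫ x, C * |ψ (x + s)|) = C * Iψ := by
      rw [integral_const_mul, hIψ]
      congr 1
      exact integral_add_right_eq_self (fun x => |ψ x|) s
    linarith
  -- key identity for σ > 0
  have key : ∀ σ : ℝ, 0 < σ →
      (∫ x, (∫ y, f y * ((1 / σ) * D ((x - y) / σ))) * ψ x) = ∫ t, D t * g (σ * t) := by
    intro σ hσ
    have hσ0 : σ ≠ 0 := ne_of_gt hσ
    -- inner integral change of variables
    have inner : ∀ x : ℝ, (∫ y, f y * ((1 / σ) * D ((x - y) / σ)))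
        = ∫ t, f (x - σ * t) * D t := by
      intro x
      have h1 : (fun y => f y * ((1 / σ) * D ((x - y) / σ)))
          = fun y => (fun t => f (x - σ * t) * ((1 / σ) * D t)) ((x - y) / σ) := by
        ext y
        simp only
        rw [mul_div_cancel₀ _ hσ0]
        ring_nf
      rw [h1]
      rw [integral_sub_left_eq_self (fun z => (fun t => f (x - σ * t) * ((1 / σ) * D t)) (z / σ)) volume x]
      rw [Measure.integral_comp_div (fun t => f (x - σ * t) * ((1 / σ) * D t)) σ]
      rw [abs_of_pos hσ, smul_eq_mul]
      have h2 : (fun t => f (x - σ * t) * ((1 / σ) * D t))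
          = fun t => (1 / σ) * (f (x - σ * t) * D t) := by ext t; ring
      rw [h2, integral_const_mul]
      field_simp
    -- Fubini
    have hmeas2 : AEStronglyMeasurable (fun p : ℝ × ℝ => f (p.1 - σ * p.2))
        ((volume : Measure ℝ).prod volume) := by
      have hScont : Continuous fun p : ℝ × ℝ => p.1 - σ * p.2 :=
        continuous_fst.sub (continuous_const.mul continuous_snd)
      set S : Set (ℝ × ℝ) := (fun p : ℝ × ℝ => p.1 - σ * p.2) ⁻¹' {(0:ℝ)}ᶜ with hSdef
      have hSopen : IsOpen S := (isOpen_compl_singleton).preimage hScont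
      have hSnull : ((volume : Measure ℝ).prod volume) Sᶜ = 0 := by
        have hSc : Sᶜ = (fun p : ℝ × ℝ => p.1 - σ * p.2) ⁻¹' {(0:ℝ)} := by
          rw [hSdef, ← Set.preimage_compl, compl_compl]
        rw [hSc]
        have hms : MeasurableSet ((fun p : ℝ × ℝ => p.1 - σ * p.2) ⁻¹' {(0:ℝ)}) :=
          hScont.measurable (measurableSet_singleton 0)
        rw [Measure.prod_apply hms]
        have : ∀ x : ℝ, (volume : Measure ℝ)
            (Prod.mk x ⁻¹' ((fun p : ℝ × ℝ => p.1 - σ * p.2) ⁻¹' {(0:ℝ)})) = 0 := by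
          intro x
          have : (Prod.mk x ⁻¹' ((fun p : ℝ × ℝ => p.1 - σ * p.2) ⁻¹' {(0:ℝ)}))
              = {x / σ} := by
            ext t
            simp only [Set.mem_preimage, Set.mem_singleton_iff]
            constructor
            · intro h; field_simp; linarith
            · intro h; subst h; field_simp; ring
          rw [this]
          exact measure_singleton _
        simp [this]
      have hcont : ContinuousOn (fun p : ℝ × ℝ => f (p.1 - σ * p.2)) S :=
        hfc.comp hScont.continuousOn (fun p hp => hp)
      have h := hcont.aestronglyMeasurable (μ := (volume : Measure ℝ).prod volume) hSopen.measurableSet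
      have e2 : ((volume : Measure ℝ).prod volume).restrict S = (volume : Measure ℝ).prod volume :=
        Measure.restrict_eq_self_of_ae_mem (mem_ae_iff.2 hSnull)
      rwa [e2] at h
    have hint : Integrable (fun p : ℝ × ℝ => f (p.1 - σ * p.2) * D p.2 * ψ p.1)
        ((volume : Measure ℝ).prod volume) := by
      have hprod : Integrable (fun p : ℝ × ℝ => ψ p.1 * D p.2)
          ((volume : Measure ℝ).prod volume) := hψint.mul_prod hDint
      apply Integrable.mono' (hprod.norm.const_mul C)
      · exact (hmeas2.mul ((hD.comp continuous_snd).aestronglyMeasurable)).mul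
          ((hψ.comp continuous_fst).aestronglyMeasurable)
      · refine Filter.Eventually.of_forall fun p => ?_
        simp only [Real.norm_eq_abs, abs_mul]
        calc |f (p.1 - σ * p.2)| * |D p.2| * |ψ p.1|
            ≤ C * |D p.2| * |ψ p.1| := by
              apply mul_le_mul_of_nonneg_right _ (abs_nonneg _)
              exact mul_le_mul_of_nonneg_right (hfb _) (abs_nonneg _)
          _ = C * (|ψ p.1| * |D p.2|) := by ring
    calc (∫ x, (∫ y, f y * ((1 / σ) * D ((x - y) / σ))) * ψ x)
        = ∫ x, (∫ t, f (x - σ * t) * D t) * ψ x := by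
          congr 1; ext x; rw [inner x]
      _ = ∫ x, ∫ t, f (x - σ * t) * D t * ψ x := by
          congr 1; ext x; rw [← integral_mul_const]
      _ = ∫ t, ∫ x, f (x - σ * t) * D t * ψ x := integral_integral_swap hint
      _ = ∫ t, D t * g (σ * t) := by
          congr 1; ext t
          have h1 : (fun x => f (x - σ * t) * D t * ψ x)
              = fun x => D t * (f (x - σ * t) * ψ x) := by ext x; ring
          have h2 : (∫ x, f (x - σ * t) * ψ x) = ∫ x, f x * ψ (x + σ * t) := by
            have h3 := integral_sub_right_eq_self (μ := volume)
              (fun x => f x * ψ (x + σ * t)) (σ * t)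
            simp only [sub_add_cancel] at h3
            exact h3
          rw [h1, integral_const_mul, h2]
  -- main limit via dominated convergence
  have hDg0 : (∫ t, D t * g 0) = ∫ x, f x * ψ x := by
    rw [integral_mul_const, hDi, one_mul]
    simp [hgdef]
  have main : Tendsto (fun σ : ℝ => ∫ t, D t * g (σ * t))
      (nhdsWithin 0 (Set.Ioi 0)) (nhds (∫ t, D t * g 0)) := by
    apply tendsto_integral_filter_of_dominated_convergence (fun t => |D t| * (C * Iψ))
    · exact Filter.Eventually.of_forall fun σ =>
        (hD.mul (hg_cont.comp (continuous_const.mul continuous_id))).aestronglyMeasurable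
    · refine Filter.Eventually.of_forall fun σ => Filter.Eventually.of_forall fun t => ?_
      rw [Real.norm_eq_abs, abs_mul]
      exact mul_le_mul_of_nonneg_left (hg_bound _) (abs_nonneg _)
    · exact hDint.abs.mul_const _
    · refine Filter.Eventually.of_forall fun t => ?_
      have h1 : Tendsto (fun σ : ℝ => σ * t) (nhdsWithin 0 (Set.Ioi 0)) (nhds 0) := by
        have h0 : Tendsto (fun σ : ℝ => σ * t) (nhds 0) (nhds 0) := by
          simpa using (continuous_mul_right t).tendsto 0
        exact h0.mono_left nhdsWithin_le_nhds
      exact tendsto_const_nhds.mul ((hg_cont.tendsto 0).comp h1)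
  rw [← hDg0]
  apply main.congr'
  filter_upwards [self_mem_nhdsWithin] with σ hσ
  exact (key σ hσ).symm
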